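/- Let E be a real inner product space, let f : E → ℝ be differentiable with gradient (with respect to the inner product) that is Lipschitz continuous with constant L > 0, and let h : E → ℝ be convex. Fix S ∈ E and set t = 1/L. If d ∈ E is a minimizer over E of the function T ↦ ⟨∇f(S), T⟩ + (1/(2t))‖T‖² + h(S + T), then f(S + d) + h(S + d) − (f(S) + h(S)) ≤ −(L/2)‖d‖². (This is Lemma 1 of the paper, stated for the S-update with the manifold variable U held fixed.) -/

import Mathlib

open RealInnerProductSpace

lemma descent_aux {E : Type*} [NormedAddCommGroup E] [InnerProductSpace ℝ E]
    (f : E → ℝ) (f' : E → E) (L : ℝ) (hL : 0 < L)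
    (hdiff : ∀ x : E, HasFDerivAt f (innerSL ℝ (f' x)) x)
    (hlip : ∀ x y : E, ‖f' x - f' y‖ ≤ L * ‖x - y‖)
    (x y : E) : f y ≤ f x + ⟪f' x, y - x⟫ + L / 2 * ‖y - x‖ ^ 2 := by
  have hcont : Continuous f' := by
    have : LipschitzWith (Real.toNNReal L) f' := by
      apply LipschitzWith.of_dist_le_mul
      intro a b
      simpa [dist_eq_norm, Real.coe_toNNReal _ hL.le] using hlip a b
    exact this.continuous
  set v := y - x with hv
  set g : ℝ → ℝ := fun t => f (x + t • v) with hg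
  have hderiv : ∀ t : ℝ, HasDerivAt g (⟪f' (x + t • v), v⟫) t := by
    intro t
    have h1 : HasDerivAt (fun t : ℝ => x + t • v) v t := by
      simpa using ((hasDerivAt_id t).smul_const v).const_add x
    have := (hdiff (x + t • v)).comp_hasDerivAt t h1
    simp at this
    exact this
  have hφcont : Continuous (fun t : ℝ => ⟪f' (x + t • v), v⟫) := by
    exact (hcont.comp (by continuity)).inner continuous_const
  have hint : f (x + (1:ℝ) • v) - f (x + (0:ℝ) • v)
      = ∫ t in (0:ℝ)..1, ⟪f' (x + t • v), v⟫ := by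
    rw [← intervalIntegral.integral_eq_sub_of_hasDerivAt
      (fun t _ => hderiv t) (hφcont.intervalIntegrable 0 1)]
  have hbound : ∀ t ∈ Set.Icc (0:ℝ) 1,
      ⟪f' (x + t • v), v⟫ ≤ ⟪f' x, v⟫ + L * t * ‖v‖ ^ 2 := by
    intro t ht
    have h1 : ⟪f' (x + t • v) - f' x, v⟫ ≤ ‖f' (x + t • v) - f' x‖ * ‖v‖ :=
      real_inner_le_norm _ _
    have h2 : ‖f' (x + t • v) - f' x‖ ≤ L * (t * ‖v‖) := by
      have := hlip (x + t • v) x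
      simpa [norm_smul, abs_of_nonneg ht.1] using this
    have h3 : ‖f' (x + t • v) - f' x‖ * ‖v‖ ≤ L * (t * ‖v‖) * ‖v‖ :=
      mul_le_mul_of_nonneg_right h2 (norm_nonneg _)
    have h4 : ⟪f' (x + t • v) - f' x, v⟫ = ⟪f' (x + t • v), v⟫ - ⟪f' x, v⟫ := by
      rw [inner_sub_left]
    nlinarith [h1, h3]
  have hintle : (∫ t in (0:ℝ)..1, ⟪f' (x + t • v), v⟫)
      ≤ ∫ t in (0:ℝ)..1, (⟪f' x, v⟫ + L * t * ‖v‖ ^ 2) := by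
    apply intervalIntegral.integral_mono_on (by norm_num)
      (hφcont.intervalIntegrable 0 1)
      ((by continuity : Continuous fun t : ℝ => ⟪f' x, v⟫ + L * t * ‖v‖ ^ 2).intervalIntegrable 0 1)
    exact hbound
  have hcalc : (∫ t in (0:ℝ)..1, (⟪f' x, v⟫ + L * t * ‖v‖ ^ 2))
      = ⟪f' x, v⟫ + L / 2 * ‖v‖ ^ 2 := by
    have hI : IntervalIntegrable (fun t : ℝ => L * t * ‖v‖ ^ 2) MeasureTheory.volume 0 1 :=
      (by continuity : Continuous fun t : ℝ => L * t * ‖v‖ ^ 2).intervalIntegrable 0 1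
    rw [intervalIntegral.integral_add (intervalIntegrable_const) hI]
    have : (∫ t in (0:ℝ)..1, L * t * ‖v‖ ^ 2)
        = (∫ t in (0:ℝ)..1, t) * (L * ‖v‖ ^ 2) := by
      rw [← intervalIntegral.integral_mul_const]
      congr 1; ext t; ring
    rw [this]
    simp [integral_id]
    ring
  have : f (x + (1:ℝ) • v) - f (x + (0:ℝ) • v) ≤ ⟪f' x, v⟫ + L / 2 * ‖v‖ ^ 2 := by
    rw [hint]; rw [← hcalc]; exact hintle
  simp only [one_smul, zero_smul, add_zero, hv] at this
  have hxy : x + (y - x) = y := by abel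
  rw [hxy] at this
  linarith

theorem stmt_0 {E : Type*} [NormedAddCommGroup E] [InnerProductSpace ℝ E]
    (f h : E → ℝ) (f' : E → E) (L : ℝ) (hL : 0 < L)
    (hdiff : ∀ x : E, HasFDerivAt f (innerSL ℝ (f' x)) x)
    (hlip : ∀ x y : E, ‖f' x - f' y‖ ≤ L * ‖x - y‖)
    (hconv : ConvexOn ℝ Set.univ h)
    (S d : E)
    (hmin : IsMinOn
      (fun T : E => ⟪f' S, T⟫ + (1 / (2 * (1 / L))) * ‖T‖ ^ 2 + h (S + T))
      Set.univ d) :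
    f (S + d) + h (S + d) - (f S + h S) ≤ -(L / 2) * ‖d‖ ^ 2 := by
  have hLhalf : (1 : ℝ) / (2 * (1 / L)) = L / 2 := by
    field_simp
  have hX : ⟪f' S, d⟫ + h (S + d) - h S ≤ -L * ‖d‖ ^ 2 := by
    have key : ∀ α : ℝ, 0 ≤ α → α < 1 →
        ⟪f' S, d⟫ + h (S + d) - h S ≤ -(L / 2) * (1 + α) * ‖d‖ ^ 2 := by
      intro α hα0 hα1
      have hm := hmin (Set.mem_univ (α • d))
      simp only [Set.mem_univ, Set.mem_setOf_eq, hLhalf] at hm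
      have hnorm : ‖α • d‖ ^ 2 = α ^ 2 * ‖d‖ ^ 2 := by
        rw [norm_smul]; simp [abs_of_nonneg hα0]; ring
      have hinner : ⟪f' S, α • d⟫ = α * ⟪f' S, d⟫ := real_inner_smul_right _ _ _
      have hconvpt : h (S + α • d) ≤ α * h (S + d) + (1 - α) * h S := by
        have := hconv.2 (Set.mem_univ (S + d)) (Set.mem_univ S) hα0
          (by linarith : (0:ℝ) ≤ 1 - α) (by ring)
        simpa [smul_add, smul_sub, sub_smul, one_smul] using
          (by
            have heq : α • (S + d) + (1 - α) • S = S + α • d := by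
              rw [smul_add, sub_smul, one_smul]; abel
            rw [← heq]; exact this)
      have hm' : ⟪f' S, d⟫ + L / 2 * ‖d‖ ^ 2 + h (S + d)
          ≤ α * ⟪f' S, d⟫ + L / 2 * (α ^ 2 * ‖d‖ ^ 2) + (α * h (S + d) + (1 - α) * h S) := by
        calc ⟪f' S, d⟫ + L / 2 * ‖d‖ ^ 2 + h (S + d)
            ≤ ⟪f' S, α • d⟫ + L / 2 * ‖α • d‖ ^ 2 + h (S + α • d) := hm
          _ = α * ⟪f' S, d⟫ + L / 2 * (α ^ 2 * ‖d‖ ^ 2) + h (S + α • d) := by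
              rw [hinner, hnorm]
          _ ≤ _ := by linarith
      have h1α : 0 < 1 - α := by linarith
      have hfac : (1 - α) * (⟪f' S, d⟫ + h (S + d) - h S)
          ≤ (1 - α) * (-(L / 2) * (1 + α) * ‖d‖ ^ 2) := by nlinarith [hm']
      exact le_of_mul_le_mul_left (by linarith [hfac]) h1α
    apply le_of_forall_pos_le_add
    intro ε hε
    rcases eq_or_lt_of_le (sq_nonneg ‖d‖) with hd0 | hd0
    · have := key 0 le_rfl (by norm_num)
      nlinarith [this]
    · set m : ℝ := min 1 (ε / (L * ‖d‖ ^ 2)) with hm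
      have hm0 : 0 < m := lt_min (by norm_num) (div_pos hε (by positivity))
      have hm1 : m ≤ 1 := min_le_left _ _
      have hm2 : m ≤ ε / (L * ‖d‖ ^ 2) := min_le_right _ _
      have hk := key (1 - m) (by linarith) (by linarith)
      have hmd : m * (L * ‖d‖ ^ 2) ≤ ε := by
        rw [← le_div_iff₀ (by positivity)]
        exact hm2
      nlinarith [hk, hmd]
  have hdesc := descent_aux f f' L hL hdiff hlip S (S + d)
  simp only [add_sub_cancel_left] at hdesc
  linarith
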